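/- Let (Σ, D, Γ₁, …, Γ_S) be an S-sides Letter Boxed puzzle in which every word of D has length at most L and the multisets satisfy Σᵢ |Γᵢ| = S·n. If S·n > k·(L − 1) + 1, then the puzzle admits no solution of length at most k. -/

import Mathlib

/-!
Letter Boxed with `S` sides: alphabet a type `A`, dictionary `D : Finset (List A)`
(of nonempty words), sides `Γ : Fin S → Multiset A`.

A solution is a list of words `ws` (each in `D`, consecutive words linked
last-letter-to-first-letter) together with a side assignment `sides : ℕ → Fin S`
for the positions of the concatenation `σ = ws.flatten`, such that consecutive positions
lie on different sides (except across word boundaries, where the side is repeated),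
every position lies on its assigned side, and every character of every side is covered
the required number of times.
-/

/-- Position `j` (0-based) of the concatenation of `ws` is the last character of one
of the words of `ws`. -/
def WordEnd {A : Type} (ws : List (List A)) (j : ℕ) : Prop :=
  ∃ t < ws.length, j + 1 = ((ws.take (t + 1)).map List.length).sum

/-- `(ws, sides)` is a solution of the Letter Boxed puzzle with dictionary `D` and
sides `Γ`.  The four conditions are the linking condition between consecutive words,
the alternation condition on sides, the membership condition, and the covering
condition. -/
def IsLBSolution {S : ℕ} {A : Type} [DecidableEq A]
    (D : Finset (List A)) (Γ : Fin S → Multiset A)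
    (ws : List (List A)) (sides : ℕ → Fin S) : Prop :=
  (∀ w ∈ ws, w ∈ D) ∧
  (∀ i : ℕ, i + 1 < ws.length → (ws.getD i []).getLast? = (ws.getD (i + 1) []).head?) ∧
  (∀ j : ℕ, j + 1 < ws.flatten.length →
    ((WordEnd ws j → sides j = sides (j + 1)) ∧ (¬ WordEnd ws j → sides j ≠ sides (j + 1)))) ∧
  (∀ (j : ℕ) (h : j < ws.flatten.length), ws.flatten.get ⟨j, h⟩ ∈ Γ (sides j)) ∧
  (∀ (i : Fin S) (γ : A),
    (Γ i).count γ ≤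
      {j : ℕ | ∃ h : j < ws.flatten.length, ws.flatten.get ⟨j, h⟩ = γ ∧ sides j = i ∧
        (j + 1 = ws.flatten.length ∨ ¬ WordEnd ws j)}.ncard)

/-- If every word of the dictionary has length at most `L`, the sides have total size
`S · n`, and `S · n > k·(L − 1) + 1`, then the puzzle has no solution with at most `k`
words. -/
theorem letterBoxed_too_few_words {S n k L : ℕ} {A : Type} [DecidableEq A]
    (D : Finset (List A)) (hD : ∀ w ∈ D, w ≠ [])
    (hL : ∀ w ∈ D, w.length ≤ L)
    (Γ : Fin S → Multiset A) (hΓ : (∑ i : Fin S, Multiset.card (Γ i)) = S * n)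
    (hbig : S * n > k * (L - 1) + 1) :
    ¬ ∃ (ws : List (List A)) (sides : ℕ → Fin S),
        ws.length ≤ k ∧ IsLBSolution D Γ ws sides := by
  classical
  rintro ⟨ws, sides, hk, hmemD, _hlink, _halt, _hin, hcov⟩
  set l : List ℕ := ws.map List.length with hl
  set N : ℕ := ws.flatten.length with hNdef
  set m : ℕ := ws.length with hmdef
  have hlm : l.length = m := by simp [hl, hmdef]
  have hNsum : N = l.sum := by rw [hNdef, hl]; exact List.length_flatten
  have hone : ∀ t (ht : t < m), 1 ≤ l[t]'(by omega) := by
    intro t ht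
    have h1 : l[t]'(by omega) = (ws[t]'ht).length := by simp [hl]
    rw [h1]
    have hmem : ws[t]'ht ∈ ws := List.getElem_mem _
    exact List.length_pos_iff.mpr (hD _ (hmemD _ hmem))
  have hlenL : ∀ x ∈ l, x ≤ L := by
    intro x hx
    rw [hl, List.mem_map] at hx
    obtain ⟨w, hw, rfl⟩ := hx
    exact hL w (hmemD w hw)
  -- partial sums
  have hmono : ∀ a b : ℕ, a ≤ b → (l.take a).sum ≤ (l.take b).sum := by
    intro a b hab
    have h1 : l.take a = (l.take b).take a := by rw [List.take_take, min_eq_left hab]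
    have h2 := List.sum_take_add_sum_drop (l.take b) a
    rw [h1]
    omega
  have hstep : ∀ t, t < m → (l.take t).sum < (l.take (t+1)).sum := by
    intro t ht
    rw [List.sum_take_succ l t (by omega)]
    have := hone t ht
    omega
  have hstrict : ∀ a b : ℕ, a < b → b ≤ m → (l.take a).sum < (l.take b).sum := by
    intro a b hab hbm
    exact lt_of_lt_of_le (hstep a (by omega)) (hmono (a+1) b (by omega))
  have hPm : (l.take m).sum = N := by
    rw [← hlm, List.take_length, hNsum]
  have hP1 : ∀ t, t < m → 1 ≤ (l.take (t+1)).sum := by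
    intro t ht
    have := hstrict t (t+1) (by omega) (by omega)
    omega
  have hWE : ∀ j, WordEnd ws j ↔ ∃ t, t < m ∧ j + 1 = (l.take (t+1)).sum := by
    intro j
    unfold WordEnd
    constructor
    · rintro ⟨t, ht, hj⟩
      exact ⟨t, ht, by rw [hj, List.map_take]⟩
    · rintro ⟨t, ht, hj⟩
      exact ⟨t, ht, by rw [hj, List.map_take]⟩
  -- the finset of word-end positions
  set E : Finset ℕ := (Finset.range m).image (fun t => (l.take (t+1)).sum - 1) with hE
  have hEcard : E.card = m := by
    rw [hE, Finset.card_image_of_injOn, Finset.card_range]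
    intro a ha b hb hab
    simp only [Finset.coe_range, Set.mem_Iio] at ha hb
    simp only at hab
    rcases lt_trichotomy a b with h | h | h
    · have := hstrict (a+1) (b+1) (by omega) (by omega)
      have := hP1 a ha; have := hP1 b hb; omega
    · exact h
    · have := hstrict (b+1) (a+1) (by omega) (by omega)
      have := hP1 a ha; have := hP1 b hb; omega
  have hErange : E ⊆ Finset.range N := by
    intro j hj
    rw [hE, Finset.mem_image] at hj
    obtain ⟨t, ht, rfl⟩ := hj
    rw [Finset.mem_range] at ht ⊢
    have h1 := hP1 t ht
    have h2 : (l.take (t+1)).sum ≤ N := hPm ▸ hmono (t+1) m (by omega)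
    omega
  have hEWE : ∀ j ∈ E, WordEnd ws j := by
    intro j hj
    rw [hE, Finset.mem_image] at hj
    obtain ⟨t, ht, rfl⟩ := hj
    rw [Finset.mem_range] at ht
    rw [hWE]
    exact ⟨t, ht, by have := hP1 t ht; omega⟩
  -- the finset of counted positions
  set G : Finset ℕ := (Finset.range N).filter
      (fun j => j + 1 = N ∨ ¬ WordEnd ws j) with hG
  have hGsub : G ⊆ insert (N - 1) (Finset.range N \ E) := by
    intro j hj
    rw [hG, Finset.mem_filter, Finset.mem_range] at hj
    obtain ⟨hjN, hj2 | hj2⟩ := hj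
    · exact Finset.mem_insert.mpr (Or.inl (by omega))
    · exact Finset.mem_insert.mpr (Or.inr (by
        rw [Finset.mem_sdiff, Finset.mem_range]
        exact ⟨hjN, fun hjE => hj2 (hEWE j hjE)⟩))
  have hGcard : G.card ≤ (N - m) + 1 := by
    calc G.card ≤ (insert (N - 1) (Finset.range N \ E)).card := Finset.card_le_card hGsub
      _ ≤ (Finset.range N \ E).card + 1 := Finset.card_insert_le _ _
      _ = (N - m) + 1 := by rw [Finset.card_sdiff_of_subset hErange, Finset.card_range, hEcard]
  have hNL : N ≤ m * L := by
    have := List.sum_le_card_nsmul l L hlenL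
    rw [hlm] at this
    simpa [hNsum] using this
  have hGbound : G.card ≤ k * (L - 1) + 1 := by
    have h1 : m * L - m = m * (L - 1) := by rw [Nat.mul_sub, Nat.mul_one]
    have h2 : m * (L - 1) ≤ k * (L - 1) := Nat.mul_le_mul_right _ hk
    omega
  -- counting: each side is covered within G
  set Gi : Fin S → Finset ℕ := fun i => G.filter (fun j => sides j = i) with hGi
  set F : Fin S → A → Finset ℕ := fun i γ =>
    (Gi i).filter (fun j => ∃ h : j < N, ws.flatten.get ⟨j, h⟩ = γ) with hF
  have hset : ∀ (i : Fin S) (γ : A),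
      {j : ℕ | ∃ h : j < ws.flatten.length, ws.flatten.get ⟨j, h⟩ = γ ∧ sides j = i ∧
        (j + 1 = ws.flatten.length ∨ ¬ WordEnd ws j)} = ↑(F i γ) := by
    intro i γ
    ext j
    simp only [Set.mem_setOf_eq, Finset.coe_filter, hF, hGi, hG, Finset.mem_filter,
      Finset.mem_range, ← hNdef]
    constructor
    · rintro ⟨h, hg, hs, hc⟩
      exact ⟨⟨⟨h, hc⟩, hs⟩, ⟨h, hg⟩⟩
    · rintro ⟨⟨⟨h, hc⟩, hs⟩, ⟨h', hg⟩⟩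
      exact ⟨h, hg, hs, hc⟩
  have hcount : ∀ (i : Fin S) (γ : A), (Γ i).count γ ≤ (F i γ).card := by
    intro i γ
    have := hcov i γ
    rwa [hset i γ, Set.ncard_coe_finset] at this
  have hΓi : ∀ i : Fin S, Multiset.card (Γ i) ≤ (Gi i).card := by
    intro i
    have hdisj : ∀ γ₁ ∈ (Γ i).toFinset, ∀ γ₂ ∈ (Γ i).toFinset, γ₁ ≠ γ₂ →
        Disjoint (F i γ₁) (F i γ₂) := by
      intro γ₁ _ γ₂ _ hne
      rw [Finset.disjoint_left]
      intro j hj1 hj2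
      rw [hF, Finset.mem_filter] at hj1 hj2
      obtain ⟨_, h1, hg1⟩ := hj1
      obtain ⟨_, h2, hg2⟩ := hj2
      exact hne (hg1 ▸ hg2 ▸ rfl)
    calc Multiset.card (Γ i) = ∑ γ ∈ (Γ i).toFinset, (Γ i).count γ :=
          (Multiset.toFinset_sum_count_eq (Γ i)).symm
      _ ≤ ∑ γ ∈ (Γ i).toFinset, (F i γ).card :=
          Finset.sum_le_sum (fun γ _ => hcount i γ)
      _ = ((Γ i).toFinset.biUnion (F i)).card := (Finset.card_biUnion hdisj).symm
      _ ≤ (Gi i).card := by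
          apply Finset.card_le_card
          intro j hj
          rw [Finset.mem_biUnion] at hj
          obtain ⟨γ, _, hjF⟩ := hj
          rw [hF, Finset.mem_filter] at hjF
          exact hjF.1
  have hGidisj : ∀ i₁ ∈ (Finset.univ : Finset (Fin S)), ∀ i₂ ∈ Finset.univ, i₁ ≠ i₂ →
      Disjoint (Gi i₁) (Gi i₂) := by
    intro i₁ _ i₂ _ hne
    rw [Finset.disjoint_left]
    intro j hj1 hj2
    rw [hGi, Finset.mem_filter] at hj1 hj2
    exact hne (hj1.2 ▸ hj2.2 ▸ rfl)
  have hfinal : S * n ≤ G.card := by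
    calc S * n = ∑ i : Fin S, Multiset.card (Γ i) := hΓ.symm
      _ ≤ ∑ i : Fin S, (Gi i).card := Finset.sum_le_sum (fun i _ => hΓi i)
      _ = (Finset.univ.biUnion Gi).card := (Finset.card_biUnion hGidisj).symm
      _ ≤ G.card := by
          apply Finset.card_le_card
          intro j hj
          rw [Finset.mem_biUnion] at hj
          obtain ⟨i, _, hjG⟩ := hj
          rw [hGi, Finset.mem_filter] at hjG
          exact hjG.1
  omega
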